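/- Let 0 < p < 1, let n be a positive integer, and let X be a binomial random variable with parameters n and p. Then for every real k with 0 ≤ k ≤ n·p, Pr(X ≤ k) ≤ exp(−n·Λ*(k/n)). -/

import Mathlib

open MeasureTheory Filter
open scoped ENNReal NNReal

/-- The Bernoulli(p) measure on `Bool`. -/
noncomputable def bernoulliBool (p : ℝ) : Measure Bool :=
  p.toNNReal • Measure.dirac true + (1 - p).toNNReal • Measure.dirac false

instance (p : ℝ) : IsFiniteMeasure (bernoulliBool p) := by
  unfold bernoulliBool; infer_instance

instance (n : ℕ) : MeasurableSpace (SimpleGraph (Fin n)) := ⊤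

/-- The Erdős–Rényi random graph `G(n,p)`: the distribution of the simple graph on `Fin n`
obtained by including each possible edge independently with probability `p`. -/
noncomputable def erMeasure (n : ℕ) (p : ℝ) : Measure (SimpleGraph (Fin n)) :=
  Measure.map (fun f : Sym2 (Fin n) → Bool => SimpleGraph.fromEdgeSet {e | f e = true})
    (Measure.pi fun _ : Sym2 (Fin n) => bernoulliBool p)

/-- A set `S` of vertices is `t`-dependent if the induced subgraph has maximum degree at most `t`,
i.e. every vertex of `S` has at most `t` neighbours inside `S`. -/
def IsTDependent {V : Type*} (G : SimpleGraph V) (t : ℕ) (S : Set V) : Prop :=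
  ∀ v ∈ S, {u ∈ S | G.Adj v u}.ncard ≤ t

/-- The `t`-improper chromatic number: the least number of colours in a vertex colouring
in which every colour class is `t`-dependent. -/
noncomputable def improperChromaticNumber {V : Type*} (G : SimpleGraph V) (t : ℕ) : ℕ :=
  sInf {k | ∃ c : V → Fin k, ∀ i : Fin k, IsTDependent G t {v | c v = i}}

/-- The `t`-dependence number: the maximum size of a `t`-dependent set. -/
noncomputable def tDependenceNumber {V : Type*} (G : SimpleGraph V) (t : ℕ) : ℕ :=
  sSup {m | ∃ S : Set V, S.ncard = m ∧ IsTDependent G t S}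

/-- The Fenchel–Legendre transform `Λ*(x) = x ln(x/p) + (1-x) ln((1-x)/(1-p))`
(with the conventions `Λ*(0) = ln(1/(1-p))`, `Λ*(1) = ln(1/p)`, which hold automatically
since `Real.log 0 = 0` in Lean). -/
noncomputable def LambdaStar (p x : ℝ) : ℝ :=
  x * Real.log (x / p) + (1 - x) * Real.log ((1 - x) / (1 - p))

/-- Chernoff upper bound for the lower tail of the binomial distribution:
for `X ∈ Bin(n,p)` and real `0 ≤ k ≤ np`, `Pr(X ≤ k) ≤ exp(-n·Λ*(k/n))`.
Here `Pr(X ≤ k) = ∑_{0 ≤ i ≤ k} C(n,i) p^i (1-p)^{n-i} = ∑_{i=0}^{⌊k⌋} C(n,i) p^i (1-p)^{n-i}`. -/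
theorem stmt4 (p : ℝ) (hp0 : 0 < p) (hp1 : p < 1) (n : ℕ) (hn : 0 < n)
    (k : ℝ) (hk0 : 0 ≤ k) (hk : k ≤ (n : ℝ) * p) :
    ∑ i ∈ Finset.range (Nat.floor k + 1),
        (n.choose i : ℝ) * p ^ i * (1 - p) ^ (n - i)
      ≤ Real.exp (-((n : ℝ) * LambdaStar p (k / n))) := by
  have hq0 : (0:ℝ) < 1 - p := by linarith
  have hn0 : (0:ℝ) < n := Nat.cast_pos.mpr hn
  set q : ℝ := 1 - p with hq
  set x : ℝ := k / n with hxdef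
  have hx0 : 0 ≤ x := div_nonneg hk0 hn0.le
  have hxp : x ≤ p := by rw [hxdef, div_le_iff₀ hn0]; linarith
  have hx1 : x < 1 := lt_of_le_of_lt hxp hp1
  have hkeq : k = x * n := by rw [hxdef, div_mul_cancel₀ k hn0.ne']
  rcases hk0.eq_or_lt with h0 | hkpos
  · -- k = 0
    have hk0' : k = 0 := h0.symm
    have hfl : Nat.floor k = 0 := by rw [hk0']; simp
    have hx0' : x = 0 := by rw [hxdef, hk0', zero_div]
    rw [hfl, hx0']
    have h1 : ∑ i ∈ Finset.range (0 + 1), (n.choose i : ℝ) * p ^ i * q ^ (n - i)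
        = (1 - p) ^ n := by simp [hq]
    have h2 : LambdaStar p 0 = - Real.log (1 - p) := by
      simp [LambdaStar, Real.log_div one_ne_zero (by linarith : (1:ℝ) - p ≠ 0)]
    rw [h1, h2, show -((n:ℝ) * -Real.log (1 - p)) = (n:ℝ) * Real.log (1 - p) by ring,
      Real.exp_nat_mul, Real.exp_log hq0]
  · have hxpos : 0 < x := div_pos hkpos hn0
    set lam : ℝ := x * q / ((1 - x) * p) with hlam
    have h1x : (0:ℝ) < 1 - x := by linarith
    have hlampos : 0 < lam := div_pos (mul_pos hxpos hq0) (mul_pos h1x hp0)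
    have hlam1 : lam ≤ 1 := by
      rw [hlam, div_le_one (mul_pos h1x hp0)]
      nlinarith
    have hkle : (Nat.floor k : ℝ) ≤ k := Nat.floor_le hk0
    have hkn : k ≤ (n:ℝ) := le_trans hk (by nlinarith)
    have hfln : Nat.floor k ≤ n := by exact_mod_cast hkle.trans hkn
    calc ∑ i ∈ Finset.range (Nat.floor k + 1),
            (n.choose i : ℝ) * p ^ i * q ^ (n - i)
        ≤ ∑ i ∈ Finset.range (Nat.floor k + 1),
            lam ^ ((i:ℝ) - k) * ((n.choose i : ℝ) * p ^ i * q ^ (n - i)) := by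
          refine Finset.sum_le_sum fun i hi => ?_
          have hik : (i:ℝ) ≤ k := by
            have : i ≤ Nat.floor k := Nat.lt_succ_iff.mp (Finset.mem_range.mp hi)
            calc (i:ℝ) ≤ (Nat.floor k : ℝ) := Nat.cast_le.mpr this
              _ ≤ k := hkle
          have h1 : 1 ≤ lam ^ ((i:ℝ) - k) :=
            Real.one_le_rpow_of_pos_of_le_one_of_nonpos hlampos hlam1 (by linarith)
          have hterm : 0 ≤ (n.choose i : ℝ) * p ^ i * q ^ (n - i) := by positivity
          exact le_mul_of_one_le_left hterm h1
      _ = lam ^ (-k) * ∑ i ∈ Finset.range (Nat.floor k + 1),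
            (n.choose i : ℝ) * (lam * p) ^ i * q ^ (n - i) := by
          rw [Finset.mul_sum]
          refine Finset.sum_congr rfl fun i _ => ?_
          rw [sub_eq_add_neg, Real.rpow_add hlampos, Real.rpow_natCast, mul_pow]
          ring
      _ ≤ lam ^ (-k) * ∑ i ∈ Finset.range (n + 1),
            (n.choose i : ℝ) * (lam * p) ^ i * q ^ (n - i) := by
          refine mul_le_mul_of_nonneg_left ?_ (Real.rpow_nonneg hlampos.le _)
          refine Finset.sum_le_sum_of_subset_of_nonneg
            (Finset.range_subset_range.mpr (by omega)) fun i _ _ => by positivity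
      _ = lam ^ (-k) * (lam * p + q) ^ n := by
          rw [add_pow]
          congr 1
          exact Finset.sum_congr rfl fun i _ => by ring
      _ = Real.exp (-((n : ℝ) * LambdaStar p x)) := by
          have hsum : lam * p + q = q / (1 - x) := by
            rw [hlam]; field_simp; ring
          have hqx : (0:ℝ) < q / (1 - x) := div_pos hq0 h1x
          rw [hsum, Real.rpow_def_of_pos hlampos,
            show (q / (1 - x)) ^ n = Real.exp ((n:ℝ) * Real.log (q / (1 - x))) by
              rw [Real.exp_nat_mul, Real.exp_log hqx],
            ← Real.exp_add]
          congr 1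
          have hxne : x ≠ 0 := hxpos.ne'
          have hpne : p ≠ 0 := hp0.ne'
          have hqne : q ≠ 0 := hq0.ne'
          have h1xne : (1:ℝ) - x ≠ 0 := h1x.ne'
          rw [LambdaStar, hlam, ← hq,
            Real.log_div (mul_ne_zero hxne hqne) (mul_ne_zero h1xne hpne),
            Real.log_mul hxne hqne, Real.log_mul h1xne hpne,
            Real.log_div hqne h1xne, Real.log_div hxne hpne,
            Real.log_div h1xne hqne, hkeq]
          ring
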